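/- Reduction lemma: if for every M>0 there exist an integer R>0 and a potential ψ with ψ(v)≥M for all v at graph distance exactly R from o, then there exists a single potential h tending to infinity (given by h = Σ_n 2^{−n} ψ_n for a suitable choice of potentials ψ_n). -/
import Mathlib


open scoped Classical
open Filter Topology MeasureTheory ProbabilityTheory

/-- A weighted network: an infinite, connected, locally finite graph with
positive edge conductances, encoded by a symmetric conductance function. -/
structure Network (V : Type*) where
  c : V → V → ℝ
  symm : ∀ x y, c x y = c y x
  nonneg : ∀ x y, 0 ≤ c x y
  locFin : ∀ x, {y | 0 < c x y}.Finite
  conn : ∀ x y, Relation.ReflTransGen (fun a b => 0 < c a b) x y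
  deg_pos : ∀ x, 0 < ∑' y, c x y
  infinite : Infinite V

namespace Network

variable {V : Type*} (N : Network V)

/-- Total conductance at a vertex. -/
noncomputable def cTot (x : V) : ℝ := ∑' y, N.c x y

/-- One-step transition probabilities of the network random walk. -/
noncomputable def p (x y : V) : ℝ := N.c x y / N.cTot x

/-- `n`-step transition probabilities of the network random walk. -/
noncomputable def pstep : ℕ → V → V → ℝ
  | 0, x, y => if x = y then 1 else 0
  | n + 1, x, y => ∑' z, pstep n x z * N.p z y

/-- The network random walk is recurrent: the expected number of returns is infinite. -/
def Recurrent : Prop := ∀ x : V, ¬ Summable (fun n => N.pstep n x x)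

/-- `avoid A n x y` is the probability that the walk started at `x` is at `y` at time `n`
without having visited the set `A` at any time `0,…,n`, i.e. `P_x(X_n = y, τ_A > n)`. -/
noncomputable def avoid (A : Set V) : ℕ → V → V → ℝ
  | 0, x, y => if x = y ∧ x ∉ A then 1 else 0
  | n + 1, x, y => if y ∈ A then 0 else ∑' z, avoid A n x z * N.p z y

/-- Green kernel of the walk killed at `o`:  `G_o(x,y) = Σ_n P_x(X_n = y, τ_o > n)`. -/
noncomputable def GreenK (o x y : V) : ℝ := ∑' n, N.avoid {o} n x y

/-- Green density of the walk killed at `o`:  `g_o(x,y) = G_o(x,y)/c_y`. -/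
noncomputable def g (o x y : V) : ℝ := N.GreenK o x y / N.cTot y

/-- The network Laplacian `Δf(v) = Σ_x c_{vx}(f(x) − f(v))`. -/
noncomputable def lap (f : V → ℝ) (v : V) : ℝ := ∑' x, N.c v x * (f x - f v)

/-- A potential on the rooted network `(G,c,o)`: a nonnegative function vanishing at `o`,
with Laplacian `1` at `o` and harmonic elsewhere. -/
def IsPotential (o : V) (h : V → ℝ) : Prop :=
  (∀ v, 0 ≤ h v) ∧ h o = 0 ∧ N.lap h o = 1 ∧ ∀ v, v ≠ o → N.lap h v = 0

/-- Harmonic measure from `v` on a set `A`:  `ω_v^A(z) = P_v(X_{τ_A} = z)`. -/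
noncomputable def harm (A : Set V) (v z : V) : ℝ :=
  if v ∈ A then (if v = z then 1 else 0)
  else if z ∈ A then ∑' n, ∑' w, N.avoid A n v w * N.p w z
  else 0

/-- Effective resistance `R_eff(x ↔ y) = g_x(y,y)`. -/
noncomputable def Reff (x y : V) : ℝ := N.g x y y

/-- Transition probabilities of the Doob `h`-transform: `p^h(x,y) = p(x,y) h(y)/h(x)`. -/
noncomputable def ph (h : V → ℝ) (x y : V) : ℝ := N.p x y * h y / h x

/-- `n`-step transition probabilities of the `h`-process. -/
noncomputable def phstep (h : V → ℝ) : ℕ → V → V → ℝ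
  | 0, x, y => if x = y then 1 else 0
  | n + 1, x, y => ∑' z, phstep h n x z * N.ph h z y

/-- The initial distribution `μ_h(v) = c_{ov} h(v)`. -/
noncomputable def muh (o : V) (h : V → ℝ) (v : V) : ℝ := N.c o v * h v

end Network

/-- `P` is the law of the Markov chain with initial distribution `μ` and transition
probabilities `q`, as a measure on trajectory space. -/
def IsChainLaw {S : Type*} [MeasurableSpace S] (μ : S → ℝ) (q : S → S → ℝ)
    (P : MeasureTheory.Measure (ℕ → S)) : Prop :=
  ∀ (n : ℕ) (v : ℕ → S),
    P {ω | ∀ i ≤ n, ω i = v i} =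
      ENNReal.ofReal (μ (v 0) * ∏ i ∈ Finset.range n, q (v i) (v (i + 1)))


section Aux

variable {V : Type*} (N : Network V)

/-- A function with support inside a finite set is summable. -/
lemma aux_summable {f : V → ℝ} {s : Set V} (hs : s.Finite) (h : ∀ y, f y ≠ 0 → y ∈ s) :
    Summable f := by
  refine summable_of_ne_finset_zero (s := hs.toFinset) ?_
  intro b hb
  by_contra hfb
  exact hb (hs.mem_toFinset.mpr (h b hfb))

lemma c_ne_iff {x y : V} : N.c x y ≠ 0 ↔ 0 < N.c x y :=
  ⟨fun h => lt_of_le_of_ne (N.nonneg x y) (Ne.symm h), fun h => ne_of_gt h⟩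

lemma sum_c_mul (v : V) (f : V → ℝ) : Summable (fun x => N.c v x * f x) := by
  refine aux_summable (N.locFin v) ?_
  intro y hy
  have : N.c v y ≠ 0 := fun h => hy (by rw [h]; ring)
  exact (c_ne_iff N).mp this

lemma cTot_pos (x : V) : 0 < N.cTot x := N.deg_pos x

lemma p_nonneg (x y : V) : 0 ≤ N.p x y := div_nonneg (N.nonneg x y) (le_of_lt (cTot_pos N x))

lemma p_pos {x y : V} (h : 0 < N.c x y) : 0 < N.p x y := div_pos h (cTot_pos N x)

lemma p_ne_imp {x y : V} (h : N.p x y ≠ 0) : 0 < N.c x y := by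
  rcases eq_or_lt_of_le (N.nonneg x y) with h' | h'
  · exfalso; apply h; unfold Network.p; rw [← h']; ring
  · exact h'

lemma sum_p_mul (v : V) (f : V → ℝ) : Summable (fun x => N.p v x * f x) := by
  refine aux_summable (N.locFin v) ?_
  intro y hy
  have : N.p v y ≠ 0 := fun h => hy (by rw [h]; ring)
  exact p_ne_imp N this

lemma tsum_p_mul (v : V) (u : V → ℝ) :
    ∑' x, N.p v x * u x = (∑' x, N.c v x * u x) / N.cTot v := by
  rw [div_eq_mul_inv, ← tsum_mul_right]
  refine tsum_congr fun x => ?_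
  unfold Network.p
  ring

lemma p_rowsum (v : V) : ∑' x, N.p v x = 1 := by
  have h := tsum_p_mul N v (fun _ => 1)
  simp only [mul_one] at h
  rw [h]
  have : (∑' x, N.c v x) = N.cTot v := rfl
  rw [this, div_self (ne_of_gt (cTot_pos N v))]

lemma lap_eq_tsum_sub (u : V → ℝ) (v : V) :
    N.lap u v = (∑' x, N.c v x * u x) - N.cTot v * u v := by
  unfold Network.lap
  have h1 : (fun x => N.c v x * (u x - u v)) = fun x => N.c v x * u x - N.c v x * u v := by
    funext x; ring
  rw [h1, Summable.tsum_sub (sum_c_mul N v u) (sum_c_mul N v (fun _ => u v)), tsum_mul_right]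
  rfl

lemma Pu_le_of_lap_nonpos {u : V → ℝ} {v : V} (h : N.lap u v ≤ 0) :
    ∑' x, N.p v x * u x ≤ u v := by
  rw [lap_eq_tsum_sub] at h
  rw [tsum_p_mul]
  rw [div_le_iff₀ (cTot_pos N v)]
  nlinarith

lemma pstep_zero (x y : V) : N.pstep 0 x y = if x = y then 1 else 0 := rfl

lemma pstep_succ (n : ℕ) (x y : V) :
    N.pstep (n + 1) x y = ∑' z, N.pstep n x z * N.p z y := rfl

lemma pstep_nonneg (n : ℕ) (x y : V) : 0 ≤ N.pstep n x y := by
  induction n generalizing y with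
  | zero => rw [pstep_zero]; split <;> norm_num
  | succ n ih =>
    rw [pstep_succ]
    exact tsum_nonneg fun z => mul_nonneg (ih z) (p_nonneg N z y)

lemma tsum_ne_zero_imp {f : V → ℝ} (h : (∑' z, f z) ≠ 0) : ∃ z, f z ≠ 0 := by
  by_contra h'
  push_neg at h'
  exact h (by rw [show f = fun _ => (0:ℝ) from funext h', tsum_zero])

lemma pstep_supp (n : ℕ) (x : V) : {y | N.pstep n x y ≠ 0}.Finite := by
  induction n with
  | zero =>
    refine Set.Finite.subset (Set.finite_singleton x) ?_
    intro y hy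
    simp only [Set.mem_setOf_eq, pstep_zero] at hy
    by_contra hxy
    exact hy (if_neg (fun h => hxy (by rw [h]; rfl)))
  | succ n ih =>
    refine Set.Finite.subset (Set.Finite.biUnion ih (fun z _ => N.locFin z)) ?_
    intro y hy
    simp only [Set.mem_setOf_eq, pstep_succ] at hy
    obtain ⟨z, hz⟩ := tsum_ne_zero_imp hy
    have h1 : N.pstep n x z ≠ 0 := fun h => hz (by rw [h]; ring)
    have h2 : N.p z y ≠ 0 := fun h => hz (by rw [h]; ring)
    exact Set.mem_biUnion h1 (p_ne_imp N h2)

lemma sum_pstep_mul (n : ℕ) (x : V) (f : V → ℝ) :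
    Summable (fun y => N.pstep n x y * f y) := by
  refine aux_summable (pstep_supp N n x) ?_
  intro y hy
  exact fun h => hy (by rw [h]; ring)

/-- Fubini step for the kernel iteration, via finite supports. -/
lemma pk_succ (u : V → ℝ) (n : ℕ) (x : V) :
    ∑' y, N.pstep (n + 1) x y * u y
      = ∑' z, N.pstep n x z * ∑' y, N.p z y * u y := by
  classical
  set A : Finset V := (pstep_supp N n x).toFinset with hA
  set B : Finset V := A.biUnion (fun z => (N.locFin z).toFinset) with hB
  have hAmem : ∀ z, N.pstep n x z ≠ 0 → z ∈ A := by
    intro z hz; rw [hA, Set.Finite.mem_toFinset]; exact hz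
  have hBmem : ∀ z ∈ A, ∀ y, N.p z y ≠ 0 → y ∈ B := by
    intro z hz y hy
    rw [hB, Finset.mem_biUnion]
    exact ⟨z, hz, (N.locFin z).mem_toFinset.mpr (p_ne_imp N hy)⟩
  have lhs1 : ∑' y, N.pstep (n + 1) x y * u y = ∑ y ∈ B, N.pstep (n + 1) x y * u y := by
    refine tsum_eq_sum ?_
    intro y hy
    have : N.pstep (n + 1) x y = 0 := by
      by_contra h
      rw [pstep_succ] at h
      obtain ⟨z, hz⟩ := tsum_ne_zero_imp h
      have h1 : N.pstep n x z ≠ 0 := fun h' => hz (by rw [h']; ring)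
      have h2 : N.p z y ≠ 0 := fun h' => hz (by rw [h']; ring)
      exact hy (hBmem z (hAmem z h1) y h2)
    rw [this]; ring
  have rhs1 : ∑' z, N.pstep n x z * ∑' y, N.p z y * u y
      = ∑ z ∈ A, N.pstep n x z * ∑' y, N.p z y * u y := by
    refine tsum_eq_sum ?_
    intro z hz
    have : N.pstep n x z = 0 := by
      by_contra h; exact hz (hAmem z h)
    rw [this]; ring
  rw [lhs1, rhs1]
  have step2 : ∀ z ∈ A, (∑' y, N.p z y * u y) = ∑ y ∈ B, N.p z y * u y := by
    intro z hz
    refine tsum_eq_sum ?_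
    intro y hy
    have : N.p z y = 0 := by
      by_contra h; exact hy (hBmem z hz y h)
    rw [this]; ring
  have step3 : ∀ y ∈ B, N.pstep (n + 1) x y = ∑ z ∈ A, N.pstep n x z * N.p z y := by
    intro y _
    rw [pstep_succ]
    refine tsum_eq_sum ?_
    intro z hz
    have : N.pstep n x z = 0 := by
      by_contra h; exact hz (hAmem z h)
    rw [this]; ring
  calc ∑ y ∈ B, N.pstep (n + 1) x y * u y
      = ∑ y ∈ B, ∑ z ∈ A, N.pstep n x z * N.p z y * u y := by
        refine Finset.sum_congr rfl fun y hy => ?_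
        rw [step3 y hy, Finset.sum_mul]
    _ = ∑ z ∈ A, ∑ y ∈ B, N.pstep n x z * (N.p z y * u y) := by
        rw [Finset.sum_comm]
        exact Finset.sum_congr rfl fun y _ => Finset.sum_congr rfl fun z _ => by ring
    _ = ∑ z ∈ A, N.pstep n x z * ∑ y ∈ B, N.p z y * u y := by
        exact Finset.sum_congr rfl fun z _ => (Finset.mul_sum _ _ _).symm
    _ = ∑ z ∈ A, N.pstep n x z * ∑' y, N.p z y * u y := by
        exact Finset.sum_congr rfl fun z hz => by rw [step2 z hz]

/-- Expansion of a function satisfying `u = s + Pu` into kernel iterates. -/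
lemma expansion (u s : V → ℝ) (hu : ∀ v, u v = s v + ∑' x, N.p v x * u x) (n : ℕ) (x : V) :
    u x = (∑ k ∈ Finset.range n, ∑' z, N.pstep k x z * s z) + ∑' z, N.pstep n x z * u z := by
  induction n with
  | zero =>
    simp only [Finset.range_zero, Finset.sum_empty, zero_add]
    have h1 : ∀ z : V, N.pstep 0 x z * u z = if z = x then u x else 0 := by
      intro z
      rw [pstep_zero]
      by_cases h : x = z
      · subst h; simp
      · rw [if_neg h, if_neg (fun h' => h h'.symm)]; ring
    rw [tsum_congr h1, tsum_ite_eq]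
  | succ n ih =>
    rw [ih, Finset.sum_range_succ]
    have key : ∑' z, N.pstep n x z * u z
        = (∑' z, N.pstep n x z * s z) + ∑' z, N.pstep (n + 1) x z * u z := by
      have h1 : ∀ z : V, N.pstep n x z * u z
          = N.pstep n x z * s z + N.pstep n x z * (∑' y, N.p z y * u y) := by
        intro z; rw [hu z]; ring
      rw [tsum_congr h1,
        Summable.tsum_add (sum_pstep_mul N n x s) (sum_pstep_mul N n x (fun z => ∑' y, N.p z y * u y)),
        ← pk_succ]
    rw [key]; ring

/-- Any nonnegative superharmonic function on a recurrent network is harmonic. -/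
lemma harm_of_superharm (hrec : N.Recurrent) (u : V → ℝ) (h0 : ∀ v, 0 ≤ u v)
    (hs : ∀ v, ∑' x, N.p v x * u x ≤ u v) : ∀ v, ∑' x, N.p v x * u x = u v := by
  intro v
  set s : V → ℝ := fun w => u w - ∑' x, N.p w x * u x with hsdef
  have hs0 : ∀ w, 0 ≤ s w := fun w => sub_nonneg.mpr (hs w)
  have hexp := expansion N u s (fun w => by rw [hsdef]; ring) 
  by_contra hne
  have hsv : 0 < s v := lt_of_le_of_ne (hs0 v) (fun h => hne (by
    have := h.symm
    rw [hsdef] at this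
    simp only [sub_eq_zero] at this
    exact this.symm))
  have key : ∀ n, ∑ k ∈ Finset.range n, N.pstep k v v ≤ u v / s v := by
    intro n
    have h1 : ∀ k, N.pstep k v v * s v ≤ ∑' z, N.pstep k v z * s z := by
      intro k
      exact Summable.le_tsum (sum_pstep_mul N k v s) v
        (fun z _ => mul_nonneg (pstep_nonneg N k v z) (hs0 z))
    have h2 : (∑ k ∈ Finset.range n, N.pstep k v v) * s v
        ≤ ∑ k ∈ Finset.range n, ∑' z, N.pstep k v z * s z := by
      rw [Finset.sum_mul]
      exact Finset.sum_le_sum fun k _ => h1 k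
    have h3 : (∑ k ∈ Finset.range n, ∑' z, N.pstep k v z * s z) ≤ u v := by
      have h4 : 0 ≤ ∑' z, N.pstep n v z * u z :=
        tsum_nonneg fun z => mul_nonneg (pstep_nonneg N n v z) (h0 z)
      have h5 := hexp n v
      linarith
    rw [le_div_iff₀ hsv]
    linarith
  exact hrec v (summable_of_sum_range_le (fun k => pstep_nonneg N k v v) key)

/-- Harmonic maximum propagation along edges + connectivity. -/
lemma const_of_harm (o : V) (u : V → ℝ) (M : ℝ)
    (hu : ∀ v, ∑' x, N.p v x * u x = u v) (hM : ∀ v, u v ≤ M) (ho : u o = M) :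
    ∀ v, u v = M := by
  have step : ∀ x y, u x = M → 0 < N.c x y → u y = M := by
    intro x y hx hc
    have hzero : ∑' z, N.p x z * (M - u z) = 0 := by
      have h1 : (fun z => N.p x z * (M - u z)) = fun z => N.p x z * M - N.p x z * u z := by
        funext z; ring
      rw [h1, Summable.tsum_sub (sum_p_mul N x (fun _ => M)) (sum_p_mul N x u)]
      have h2 : ∑' z, N.p x z * M = M := by rw [tsum_mul_right, p_rowsum]; ring
      rw [h2, hu x, hx]; ring
    by_contra hne
    have hylt : u y < M := lt_of_le_of_ne (hM y) hne
    have hterm : 0 < N.p x y * (M - u y) := mul_pos (p_pos N hc) (by linarith)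
    have hsummable : Summable (fun z => N.p x z * (M - u z)) := by
      have h1 : (fun z => N.p x z * (M - u z)) = fun z => N.p x z * M - N.p x z * u z := by
        funext z; ring
      rw [h1]
      exact (sum_p_mul N x (fun _ => M)).sub (sum_p_mul N x u)
    have hle : N.p x y * (M - u y) ≤ ∑' z, N.p x z * (M - u z) :=
      Summable.le_tsum hsummable y (fun z _ => mul_nonneg (p_nonneg N x z) (by
        have := hM z; linarith))
    rw [hzero] at hle
    linarith
  intro v
  have hconn := N.conn o v
  induction hconn with
  | refl => exact ho
  | tail _ hc ih => exact step _ _ ih hc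

end Aux

section Dist

variable {V : Type*} (N : Network V) (o : V)

/-- Graph distance from `o`. -/
noncomputable def nd (v : V) : ℕ := sInf {n : ℕ | 0 < N.pstep n o v}

lemma reach (v : V) : ∃ n, 0 < N.pstep n o v := by
  have hconn := N.conn o v
  induction hconn with
  | refl => exact ⟨0, by rw [pstep_zero, if_pos rfl]; norm_num⟩
  | tail _ hc ih =>
    obtain ⟨n, hn⟩ := ih
    rename_i x y _
    refine ⟨n + 1, ?_⟩
    rw [pstep_succ]
    have hterm : 0 < N.pstep n o x * N.p x y := mul_pos hn (p_pos N hc)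
    have hle : N.pstep n o x * N.p x y ≤ ∑' z, N.pstep n o z * N.p z y :=
      Summable.le_tsum (sum_pstep_mul N n o (fun z => N.p z y)) x
        (fun z _ => mul_nonneg (pstep_nonneg N n o z) (p_nonneg N z y))
    linarith

lemma nd_spec (v : V) : 0 < N.pstep (nd N o v) o v :=
  Nat.sInf_mem (reach N o v)

lemma nd_o : nd N o o = 0 :=
  Nat.sInf_eq_zero.mpr (Or.inl (by simp only [Set.mem_setOf_eq, pstep_zero, if_pos rfl]; norm_num))

lemma nd_adj {x y : V} (hc : 0 < N.c x y) : nd N o y ≤ nd N o x + 1 := by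
  refine Nat.sInf_le ?_
  simp only [Set.mem_setOf_eq]
  rw [pstep_succ]
  have hterm : 0 < N.pstep (nd N o x) o x * N.p x y := mul_pos (nd_spec N o x) (p_pos N hc)
  have hle : N.pstep (nd N o x) o x * N.p x y ≤ ∑' z, N.pstep (nd N o x) o z * N.p z y :=
    Summable.le_tsum (sum_pstep_mul N _ o (fun z => N.p z y)) x
      (fun z _ => mul_nonneg (pstep_nonneg N _ o z) (p_nonneg N z y))
  linarith

lemma ball_finite (R : ℕ) : {v : V | nd N o v ≤ R}.Finite := by
  refine Set.Finite.subset
    (Set.Finite.biUnion (Finset.range (R + 1)).finite_toSet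
      (fun n _ => pstep_supp N n o)) ?_
  intro v hv
  simp only [Set.mem_setOf_eq] at hv
  have hmem : nd N o v ∈ (↑(Finset.range (R + 1)) : Set ℕ) := by
    simp only [Finset.coe_range, Set.mem_Iio]; omega
  exact Set.mem_biUnion hmem (ne_of_gt (nd_spec N o v))

/-- A priori bound: potentials are uniformly bounded pointwise. -/
lemma exists_bound : ∀ v : V, ∃ C : ℝ, ∀ ψ : V → ℝ, N.IsPotential o ψ → ψ v ≤ C := by
  intro v
  have hconn := N.conn o v
  induction hconn with
  | refl => exact ⟨0, fun ψ hψ => le_of_eq hψ.2.1⟩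
  | tail _ hc ih =>
    rename_i x y _
    obtain ⟨C, hC⟩ := ih
    by_cases hx : x = o
    · subst hx
      refine ⟨1 / N.c x y, fun ψ hψ => ?_⟩
      obtain ⟨hpos, hzero, hlapo, _⟩ := hψ
      have h1 : ∑' t, N.c x t * ψ t = 1 := by
        have := lap_eq_tsum_sub N ψ x
        rw [hlapo, hzero] at this
        linarith [this]
      have h2 : N.c x y * ψ y ≤ 1 := by
        rw [← h1]
        exact Summable.le_tsum (sum_c_mul N x ψ) y
          (fun t _ => mul_nonneg (N.nonneg x t) (hpos t))
      rw [le_div_iff₀ hc]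
      nlinarith
    · refine ⟨N.cTot x * C / N.c x y, fun ψ hψ => ?_⟩
      obtain ⟨hpos, hzero, _, hlap⟩ := hψ
      have h1 : ∑' t, N.c x t * ψ t = N.cTot x * ψ x := by
        have := lap_eq_tsum_sub N ψ x
        rw [hlap x hx] at this
        linarith [this]
      have h2 : N.c x y * ψ y ≤ N.cTot x * ψ x := by
        rw [← h1]
        exact Summable.le_tsum (sum_c_mul N x ψ) y
          (fun t _ => mul_nonneg (N.nonneg x t) (hpos t))
      have h3 : N.cTot x * ψ x ≤ N.cTot x * C :=
        mul_le_mul_of_nonneg_left (hC ψ ⟨hpos, hzero, by assumption, hlap⟩)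
          (le_of_lt (cTot_pos N x))
      rw [le_div_iff₀ hc]
      nlinarith

/-- F1: minimum principle at infinity for potentials on recurrent networks. -/
lemma potential_ge_outside (hrec : N.Recurrent) {ψ : V → ℝ} {M : ℝ} {R : ℕ}
    (hψ : N.IsPotential o ψ) (hM : 0 < M) (hR : 0 < R)
    (hsph : ∀ v : V, sInf {n : ℕ | 0 < N.pstep n o v} = R → M ≤ ψ v) :
    ∀ v : V, R ≤ sInf {n : ℕ | 0 < N.pstep n o v} → M ≤ ψ v := by
  obtain ⟨hpos, hzero, hlapo, hlap⟩ := hψ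
  set u : V → ℝ := fun v => if nd N o v ≤ R then M else min (ψ v) M with hudef
  have hsph' : ∀ v : V, nd N o v = R → M ≤ ψ v := fun v hv => hsph v hv
  have hule : ∀ v, u v ≤ M := by
    intro v; simp only [hudef]
    by_cases h : nd N o v ≤ R
    · rw [if_pos h]
    · rw [if_neg h]; exact min_le_right _ _
  have hu0 : ∀ v, 0 ≤ u v := by
    intro v; simp only [hudef]
    by_cases h : nd N o v ≤ R
    · rw [if_pos h]; linarith
    · rw [if_neg h]; exact le_min (hpos v) (le_of_lt hM)
  -- superharmonicity of u
  have hsuper : ∀ v, N.lap u v ≤ 0 := by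
    intro v
    rcases lt_trichotomy (nd N o v) R with hv | hv | hv
    · -- interior of ball: all neighbors in ball, u constant = M
      have : ∀ x, N.c v x * (u x - u v) = 0 := by
        intro x
        by_cases hc : N.c v x = 0
        · rw [hc]; ring
        · have hcpos := (c_ne_iff N).mp hc
          have hx : nd N o x ≤ R := le_trans (nd_adj N o hcpos) (by omega)
          have huv : u v = M := by simp only [hudef]; exact if_pos (le_of_lt hv)
          have hux : u x = M := by simp only [hudef]; exact if_pos hx
          rw [huv, hux]; ring
      unfold Network.lap
      rw [tsum_congr this, tsum_zero]
    · -- on the sphere: u v = M and all values ≤ M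
      have huv : u v = M := by simp only [hudef]; exact if_pos (le_of_eq hv)
      unfold Network.lap
      refine tsum_nonpos fun x => ?_
      rw [huv]
      have := hule x
      have := N.nonneg v x
      nlinarith
    · -- outside the ball
      have hvne : v ≠ o := by
        intro h; rw [h, nd_o] at hv; omega
      have hnotin : ¬ (nd N o v ≤ R) := by omega
      have huv : u v = min (ψ v) M := by simp only [hudef]; exact if_neg hnotin
      have hux : ∀ x, 0 < N.c v x → u x = min (ψ x) M := by
        intro x hc
        have hxd : R ≤ nd N o x := by
          have := nd_adj N o (by rw [N.symm]; exact hc)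
          omega
        rcases eq_or_lt_of_le hxd with hxd' | hxd'
        · have h1 : u x = M := by simp only [hudef]; exact if_pos (le_of_eq hxd'.symm)
          have h2 : min (ψ x) M = M := min_eq_right (hsph' x hxd'.symm)
          rw [h1, h2]
        · simp only [hudef]; exact if_neg (by omega)
      by_cases hcase : ψ v ≤ M
      · -- u v = ψ v; compare with lap ψ v = 0
        have huv' : u v = ψ v := by rw [huv, min_eq_left hcase]
        have hcomp : ∀ x, N.c v x * (u x - u v) ≤ N.c v x * (ψ x - ψ v) := by
          intro x
          by_cases hc : N.c v x = 0
          · rw [hc]; ring_nf; rfl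
          · have hcpos := (c_ne_iff N).mp hc
            have h1 : u x ≤ ψ x := by rw [hux x hcpos]; exact min_le_left _ _
            rw [huv']
            have := le_of_lt hcpos
            nlinarith
        have hlapv : N.lap ψ v = 0 := hlap v hvne
        unfold Network.lap
        calc ∑' x, N.c v x * (u x - u v)
            ≤ ∑' x, N.c v x * (ψ x - ψ v) :=
              Summable.tsum_le_tsum hcomp (sum_c_mul N v (fun x => u x - u v))
                (sum_c_mul N v (fun x => ψ x - ψ v))
          _ = N.lap ψ v := rfl
          _ = 0 := hlapv
      · -- u v = M, all values ≤ M
        have huv' : u v = M := by rw [huv, min_eq_right (le_of_not_ge hcase)]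
        unfold Network.lap
        refine tsum_nonpos fun x => ?_
        rw [huv']
        have := hule x
        have := N.nonneg v x
        nlinarith
  -- u is harmonic, hence constant = M
  have hharm : ∀ v, ∑' x, N.p v x * u x = u v :=
    harm_of_superharm N hrec u hu0 (fun v => Pu_le_of_lap_nonpos N (hsuper v))
  have huo : u o = M := by simp only [hudef]; simp [nd_o N o]
  have hconst : ∀ v, u v = M := const_of_harm N o u M hharm hule huo
  intro v hv
  change R ≤ nd N o v at hv
  rcases eq_or_lt_of_le hv with hv' | hv'
  · exact hsph' v hv'.symm
  · have h1 : u v = min (ψ v) M := by simp only [hudef]; exact if_neg (by omega)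
    have h2 := hconst v
    rw [h1] at h2
    exact min_eq_right_iff.mp h2

/-- The Laplacian commutes with convergent series of potentials. -/
lemma lap_tsum (w : ℕ → ℝ) (ψ : ℕ → V → ℝ)
    (hsum : ∀ x : V, Summable fun n => w n * ψ n x) (v : V) :
    N.lap (fun x => ∑' n, w n * ψ n x) v = ∑' n, w n * N.lap (ψ n) v := by
  classical
  set S : Finset V := (N.locFin v).toFinset with hS
  have hSmem : ∀ x, N.c v x ≠ 0 → x ∈ S := by
    intro x hx
    rw [hS, Set.Finite.mem_toFinset]
    exact (c_ne_iff N).mp hx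
  have hsum2 : ∀ x : V, Summable fun n => N.c v x * (w n * ψ n x - w n * ψ n v) := by
    intro x
    exact (((hsum x).sub (hsum v)).mul_left (N.c v x)).congr (fun n => by ring)
  have lhs1 : N.lap (fun x => ∑' n, w n * ψ n x) v
      = ∑ x ∈ S, ∑' n, N.c v x * (w n * ψ n x - w n * ψ n v) := by
    unfold Network.lap
    rw [tsum_eq_sum (s := S) (fun x hx => by
      have : N.c v x = 0 := by by_contra h; exact hx (hSmem x h)
      rw [this]; ring)]
    refine Finset.sum_congr rfl fun x _ => ?_
    show N.c v x * ((∑' n, w n * ψ n x) - ∑' n, w n * ψ n v) = _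
    rw [← Summable.tsum_sub (hsum x) (hsum v), ← tsum_mul_left]
  have rhs1 : ∑' n, w n * N.lap (ψ n) v
      = ∑' n, ∑ x ∈ S, N.c v x * (w n * ψ n x - w n * ψ n v) := by
    refine tsum_congr fun n => ?_
    unfold Network.lap
    rw [tsum_eq_sum (s := S) (fun x hx => by
      have : N.c v x = 0 := by by_contra h; exact hx (hSmem x h)
      rw [this]; ring)]
    rw [Finset.mul_sum]
    exact Finset.sum_congr rfl fun x _ => by ring
  rw [lhs1, rhs1, Summable.tsum_finsetSum (fun x _ => hsum2 x)]

end Dist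

/-- Reduction lemma: if for every `M > 0` there are an integer `R > 0` and a
potential `ψ` with `ψ ≥ M` on the sphere of radius `R` about `o` (graph distance
`d(o,v) = inf{n : p^n(o,v) > 0}`), then there exists a potential tending to infinity. -/
theorem potential_tending_to_infinity_of_spheres {V : Type*} (N : Network V)
    (hrec : N.Recurrent) (o : V)
    (hyp : ∀ M : ℝ, 0 < M → ∃ R : ℕ, 0 < R ∧ ∃ ψ : V → ℝ, N.IsPotential o ψ ∧
      ∀ v : V, sInf {n : ℕ | 0 < N.pstep n o v} = R → M ≤ ψ v) :
    ∃ h : V → ℝ, N.IsPotential o h ∧ ∀ M : ℝ, 0 < M → {v : V | h v ≤ M}.Finite := by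
  classical
  have hyp' : ∀ n : ℕ, ∃ R : ℕ, 0 < R ∧ ∃ ψ : V → ℝ, N.IsPotential o ψ ∧
      ∀ v : V, sInf {m : ℕ | 0 < N.pstep m o v} = R → (4:ℝ) ^ (n + 1) ≤ ψ v :=
    fun n => hyp ((4:ℝ) ^ (n + 1)) (by positivity)
  choose R hRpos ψ hpot hsph using hyp'
  choose C hC using exists_bound N o
  set w : ℕ → ℝ := fun n => (2:ℝ)⁻¹ ^ n * 2⁻¹ with hw
  have hwpos : ∀ n, 0 < w n := fun n => by positivity
  have hwsum : Summable w :=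
    (summable_geometric_of_lt_one (by norm_num) (by norm_num)).mul_right _
  have hwtsum : ∑' n, w n = 1 := by
    simp only [hw]
    rw [tsum_mul_right, tsum_geometric_of_lt_one (by norm_num) (by norm_num)]
    norm_num
  have hsum : ∀ v : V, Summable (fun n => w n * ψ n v) := by
    intro v
    refine Summable.of_nonneg_of_le
      (fun n => mul_nonneg (le_of_lt (hwpos n)) ((hpot n).1 v))
      (fun n => mul_le_mul_of_nonneg_left (hC v (ψ n) (hpot n)) (le_of_lt (hwpos n)))
      (hwsum.mul_right (C v))
  refine ⟨fun v => ∑' n, w n * ψ n v, ⟨?_, ?_, ?_, ?_⟩, ?_⟩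
  · intro v
    exact tsum_nonneg fun n => mul_nonneg (le_of_lt (hwpos n)) ((hpot n).1 v)
  · show (∑' n, w n * ψ n o) = 0
    rw [tsum_congr (fun n => by rw [(hpot n).2.1, mul_zero]), tsum_zero]
  · rw [lap_tsum N w ψ hsum o,
      tsum_congr (fun n => by rw [(hpot n).2.2.1, mul_one]), hwtsum]
  · intro v hv
    rw [lap_tsum N w ψ hsum v,
      tsum_congr (fun n => by rw [(hpot n).2.2.2 v hv, mul_zero]), tsum_zero]
  · intro M hM
    have key : ∀ m : ℕ, w m * (4:ℝ) ^ (m + 1) = 2 ^ (m + 1) := by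
      intro m
      simp only [hw]
      induction m with
      | zero => norm_num
      | succ m ih =>
        have e1 : ((2:ℝ)⁻¹ ^ (m + 1) * 2⁻¹) * 4 ^ (m + 1 + 1)
            = (((2:ℝ)⁻¹ ^ m * 2⁻¹) * 4 ^ (m + 1)) * (2⁻¹ * 4) := by
          rw [pow_succ (2:ℝ)⁻¹, pow_succ (4:ℝ) (m + 1)]
          ring
        rw [e1, ih, pow_succ (2:ℝ) (m + 1)]
        norm_num
    obtain ⟨n, hn⟩ := pow_unbounded_of_one_lt (y := (2:ℝ)) M (by norm_num)
    refine Set.Finite.subset (ball_finite N o (R n)) ?_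
    intro v hv
    simp only [Set.mem_setOf_eq] at hv ⊢
    by_contra hout
    push_neg at hout
    have h1 : (4:ℝ) ^ (n + 1) ≤ ψ n v :=
      potential_ge_outside N o hrec (hpot n) (by positivity) (hRpos n) (hsph n) v
        (le_of_lt hout)
    have h2 : w n * ψ n v ≤ ∑' m, w m * ψ m v :=
      Summable.le_tsum (hsum v) n (fun m _ => mul_nonneg (le_of_lt (hwpos m)) ((hpot m).1 v))
    have h4 : w n * (4:ℝ) ^ (n + 1) ≤ w n * ψ n v :=
      mul_le_mul_of_nonneg_left h1 (le_of_lt (hwpos n))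
    have h5 : (2:ℝ) ^ (n + 1) = 2 ^ n * 2 := pow_succ 2 n
    have h6 : (0:ℝ) < 2 ^ n := by positivity
    have := key n
    linarith
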